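/- The polynomial S(x,y,z) := x⁴y² + y⁴z² + z⁴x² − 3x²y²z² is nonnegative on all of ℝ³, but cannot be written as a finite sum of squares of real polynomials in x, y, z. -/

import Mathlib

open MvPolynomial

/-- The polynomial `S(x,y,z) = x⁴y² + y⁴z² + z⁴x² − 3x²y²z²`. -/
noncomputable def polyS : MvPolynomial (Fin 3) ℝ :=
  X 0 ^ 4 * X 1 ^ 2 + X 1 ^ 4 * X 2 ^ 2 + X 2 ^ 4 * X 0 ^ 2 -
    3 * (X 0 ^ 2 * X 1 ^ 2 * X 2 ^ 2)

namespace PolySAux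

lemma amgm3 (a b c : ℝ) : 0 ≤ a^4*b^2 + b^4*c^2 + c^4*a^2 - 3*(a^2*b^2*c^2) := by
  have h := Real.geom_mean_le_arith_mean3_weighted (by norm_num : (0:ℝ) ≤ 1/3)
    (by norm_num : (0:ℝ) ≤ 1/3) (by norm_num : (0:ℝ) ≤ 1/3)
    (by positivity : (0:ℝ) ≤ a^4*b^2) (by positivity : (0:ℝ) ≤ b^4*c^2)
    (by positivity : (0:ℝ) ≤ c^4*a^2) (by norm_num)
  have key : (a^4*b^2) ^ ((1:ℝ)/3) * (b^4*c^2) ^ ((1:ℝ)/3) * (c^4*a^2) ^ ((1:ℝ)/3)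
      = a^2*b^2*c^2 := by
    rw [← Real.mul_rpow (by positivity) (by positivity),
      ← Real.mul_rpow (by positivity) (by positivity)]
    have h2 : a^4*b^2 * (b^4*c^2) * (c^4*a^2) = (a^2*b^2*c^2)^(3:ℕ) := by ring
    rw [h2, one_div]
    exact Real.pow_rpow_inv_natCast (by positivity) (by norm_num)
  rw [key] at h
  linarith

/-- degree of a `Fin 3` finsupp as sum of components -/
lemma fsum_eq (d : Fin 3 →₀ ℕ) : (d.sum fun _ e => e) = d 0 + d 1 + d 2 := by
  rw [Finsupp.sum_fintype _ _ (fun _ => rfl)]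
  exact Fin.sum_univ_three _

lemma support_sum_eq (d : Fin 3 →₀ ℕ) : (∑ i ∈ d.support, d i) = d 0 + d 1 + d 2 :=
  fsum_eq d

lemma degree_eq (d : Fin 3 →₀ ℕ) : d.degree = d 0 + d 1 + d 2 := support_sum_eq d

lemma coeff_deg_le {q : MvPolynomial (Fin 3) ℝ} {e : Fin 3 →₀ ℕ} (h : coeff e q ≠ 0) :
    e 0 + e 1 + e 2 ≤ q.totalDegree := by
  rw [← fsum_eq]
  exact le_totalDegree (mem_support_iff.mpr h)

lemma coeff_zero_of_deg_gt {q : MvPolynomial (Fin 3) ℝ} {e : Fin 3 →₀ ℕ}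
    (h : q.totalDegree < e 0 + e 1 + e 2) : coeff e q = 0 :=
  coeff_eq_zero_of_totalDegree_lt (by rwa [support_sum_eq])

lemma ext3 {d e : Fin 3 →₀ ℕ} (h0 : d 0 = e 0) (h1 : d 1 = e 1) (h2 : d 2 = e 2) : d = e := by
  ext j; fin_cases j <;> assumption

/-- the monomial exponent (a, b, c) -/
noncomputable def m3 (a b c : ℕ) : Fin 3 →₀ ℕ :=
  Finsupp.single 0 a + Finsupp.single 1 b + Finsupp.single 2 c

@[simp] lemma m3_apply0 (a b c : ℕ) : m3 a b c 0 = a := by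
  simp [m3, Finsupp.single_apply]
@[simp] lemma m3_apply1 (a b c : ℕ) : m3 a b c 1 = b := by
  simp [m3, Finsupp.single_apply]
@[simp] lemma m3_apply2 (a b c : ℕ) : m3 a b c 2 = c := by
  simp [m3, Finsupp.single_apply]

lemma mono_eq (a b c : ℕ) :
    (X 0 ^ a * X 1 ^ b * X 2 ^ c : MvPolynomial (Fin 3) ℝ) = monomial (m3 a b c) 1 := by
  rw [X_pow_eq_monomial, X_pow_eq_monomial, X_pow_eq_monomial, monomial_mul, monomial_mul,
    one_mul, one_mul, m3]

lemma if_m3 (a b c : ℕ) (d : Fin 3 →₀ ℕ) (r : ℝ) :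
    (if m3 a b c = d then r else 0) = (if d 0 = a ∧ d 1 = b ∧ d 2 = c then r else 0) := by
  refine if_congr ⟨fun h => ?_, fun ⟨h0, h1, h2⟩ => ext3 (by simp [h0]) (by simp [h1]) (by simp [h2])⟩ rfl rfl
  rw [← h]; simp

lemma coeff_polyS (d : Fin 3 →₀ ℕ) : coeff d polyS =
    (if d 0 = 4 ∧ d 1 = 2 ∧ d 2 = 0 then 1 else 0)
    + (if d 0 = 0 ∧ d 1 = 4 ∧ d 2 = 2 then 1 else 0)
    + (if d 0 = 2 ∧ d 1 = 0 ∧ d 2 = 4 then 1 else 0)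
    - (if d 0 = 2 ∧ d 1 = 2 ∧ d 2 = 2 then 3 else 0) := by
  have hS : polyS = monomial (m3 4 2 0) 1 + monomial (m3 0 4 2) 1 + monomial (m3 2 0 4) 1
      - monomial (m3 2 2 2) 3 := by
    have h1 : polyS = X 0 ^ 4 * X 1 ^ 2 * X 2 ^ 0 + X 0 ^ 0 * X 1 ^ 4 * X 2 ^ 2
        + X 0 ^ 2 * X 1 ^ 0 * X 2 ^ 4 - 3 * (X 0 ^ 2 * X 1 ^ 2 * X 2 ^ 2) := by
      rw [polyS]; ring
    have h3 : (3 : MvPolynomial (Fin 3) ℝ) = C 3 := (map_ofNat C 3).symm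
    rw [h1, mono_eq, mono_eq, mono_eq, mono_eq, h3, C_mul_monomial]
    norm_num
  rw [hS, coeff_sub, coeff_add, coeff_add, coeff_monomial, coeff_monomial, coeff_monomial,
    coeff_monomial, if_m3, if_m3, if_m3, if_m3]

lemma sos_eval_zero {m : ℕ} {q : Fin m → MvPolynomial (Fin 3) ℝ}
    (h : ∑ i, q i ^ 2 = 0) (i : Fin m) : q i = 0 := by
  apply MvPolynomial.funext
  intro v
  have hv : ∑ j, (eval v (q j)) ^ 2 = 0 := by
    have := congrArg (eval v) h
    simpa using this
  have h0 := (Finset.sum_eq_zero_iff_of_nonneg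
    (fun j _ => sq_nonneg (eval v (q j)))).mp hv i (Finset.mem_univ i)
  have : eval v (q i) = 0 := by
    exact pow_eq_zero_iff (by norm_num) |>.mp h0
  simpa using this

lemma totalDegree_polyS : polyS.totalDegree ≤ 6 := by
  have hX : ∀ (i : Fin 3) (n : ℕ), ((X i : MvPolynomial (Fin 3) ℝ) ^ n).totalDegree ≤ n := by
    intro i n; simp [totalDegree_X_pow]
  have hm : ∀ (a b : ℕ) (i j : Fin 3),
      ((X i : MvPolynomial (Fin 3) ℝ) ^ a * X j ^ b).totalDegree ≤ a + b := fun a b i j =>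
    le_trans (totalDegree_mul _ _) (add_le_add (hX i a) (hX j b))
  have h4 : ((3 : MvPolynomial (Fin 3) ℝ) * (X 0 ^ 2 * X 1 ^ 2 * X 2 ^ 2)).totalDegree ≤ 6 := by
    refine le_trans (totalDegree_mul _ _) ?_
    have h3 : (3 : MvPolynomial (Fin 3) ℝ) = C 3 := (map_ofNat C 3).symm
    rw [h3, totalDegree_C, zero_add]
    exact le_trans (totalDegree_mul _ _) (add_le_add (hm 2 2 0 1) (hX 2 2))
  rw [polyS]
  refine le_trans (totalDegree_sub _ _) (max_le ?_ h4)
  refine le_trans (totalDegree_add _ _) (max_le ?_ (hm 4 2 2 0))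
  exact le_trans (totalDegree_add _ _) (max_le (hm 4 2 0 1) (hm 4 2 1 2))

/-- degree bound: each `q i` has total degree at most 3 -/
lemma deg_le {m : ℕ} {q : Fin m → MvPolynomial (Fin 3) ℝ}
    (hS : polyS = ∑ i, q i ^ 2) (i : Fin m) : (q i).totalDegree ≤ 3 := by
  by_contra hc
  push_neg at hc
  set N := Finset.univ.sup (fun j => (q j).totalDegree) with hNdef
  have hN4 : 4 ≤ N := le_trans hc (Finset.le_sup (f := fun j => (q j).totalDegree) (Finset.mem_univ i))
  have hqN : ∀ j, (q j).totalDegree ≤ N := fun j => Finset.le_sup (f := fun j => (q j).totalDegree) (Finset.mem_univ j)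
  -- the top homogeneous components sum of squares is zero
  have hcoeffsq : ∀ (j : Fin m) (d : Fin 3 →₀ ℕ), d.degree = 2 * N →
      coeff d ((homogeneousComponent N (q j)) ^ 2) = coeff d (q j ^ 2) := by
    intro j d hd
    rw [sq, coeff_mul, sq, coeff_mul]
    apply Finset.sum_congr rfl
    intro x hx
    have hxsum : x.1 + x.2 = d := Finset.HasAntidiagonal.mem_antidiagonal.mp hx
    have hdeg : (x.1 0 + x.1 1 + x.1 2) + (x.2 0 + x.2 1 + x.2 2) = 2 * N := by
      have h0 := DFunLike.congr_fun hxsum 0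
      have h1 := DFunLike.congr_fun hxsum 1
      have h2 := DFunLike.congr_fun hxsum 2
      simp only [Finsupp.add_apply] at h0 h1 h2
      rw [degree_eq] at hd
      omega
    by_cases hx1 : x.1 0 + x.1 1 + x.1 2 ≤ N
    · by_cases hx2 : x.2 0 + x.2 1 + x.2 2 ≤ N
      · have e1 : x.1 0 + x.1 1 + x.1 2 = N := by omega
        have e2 : x.2 0 + x.2 1 + x.2 2 = N := by omega
        rw [coeff_homogeneousComponent, coeff_homogeneousComponent,
          if_pos (by rw [degree_eq]; exact e1), if_pos (by rw [degree_eq]; exact e2)]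
      · push_neg at hx2
        have z1 : coeff x.2 (q j) = 0 := coeff_zero_of_deg_gt (lt_of_le_of_lt (hqN j) hx2)
        have z2 : coeff x.2 (homogeneousComponent N (q j)) = 0 := by
          rw [coeff_homogeneousComponent, if_neg (by rw [degree_eq]; omega)]
        rw [z1, z2, mul_zero, mul_zero]
    · push_neg at hx1
      have z1 : coeff x.1 (q j) = 0 := coeff_zero_of_deg_gt (lt_of_le_of_lt (hqN j) hx1)
      have z2 : coeff x.1 (homogeneousComponent N (q j)) = 0 := by
        rw [coeff_homogeneousComponent, if_neg (by rw [degree_eq]; omega)]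
      rw [z1, z2, zero_mul, zero_mul]
  have hzero : ∑ j, (homogeneousComponent N (q j)) ^ 2 = 0 := by
    apply MvPolynomial.ext
    intro d
    rw [coeff_zero]
    by_cases hd : d.degree = 2 * N
    · rw [coeff_sum]
      have : ∑ j, coeff d ((homogeneousComponent N (q j)) ^ 2) = ∑ j, coeff d (q j ^ 2) :=
        Finset.sum_congr rfl (fun j _ => hcoeffsq j d hd)
      rw [this, ← coeff_sum, ← hS]
      apply coeff_zero_of_deg_gt
      rw [← degree_eq, hd]
      exact lt_of_le_of_lt totalDegree_polyS (by omega)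
    · have hh : ((∑ j, (homogeneousComponent N (q j)) ^ 2 :
          MvPolynomial (Fin 3) ℝ)).IsHomogeneous (2 * N) := by
        apply IsHomogeneous.sum
        intro j _
        rw [sq, two_mul]
        exact (homogeneousComponent_isHomogeneous N (q j)).mul
          (homogeneousComponent_isHomogeneous N (q j))
      exact hh.coeff_eq_zero hd
  -- pick the index attaining the sup
  obtain ⟨i₀, -, hi₀⟩ := Finset.exists_mem_eq_sup Finset.univ
    ⟨i, Finset.mem_univ i⟩ (fun j => (q j).totalDegree)
  have hqi₀ : (q i₀).totalDegree = N := hi₀.symm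
  have hne : q i₀ ≠ 0 := by
    intro h
    rw [h] at hqi₀
    simp [totalDegree_zero] at hqi₀
    omega
  obtain ⟨d₀, hd₀mem, hd₀⟩ := Finset.exists_mem_eq_sup (q i₀).support
    (MvPolynomial.support_nonempty.mpr hne) (fun s => s.sum fun _ e => e)
  have hcne : coeff d₀ (homogeneousComponent N (q i₀)) ≠ 0 := by
    rw [coeff_homogeneousComponent]
    rw [if_pos]
    · exact mem_support_iff.mp hd₀mem
    · rw [degree_eq d₀, ← fsum_eq d₀]
      have hsup : (q i₀).totalDegree = d₀.sum fun _ e => e := hd₀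
      rw [← hsup, hqi₀]
  have := sos_eval_zero hzero i₀
  rw [this] at hcne
  simp at hcne

/-- the key extraction lemma: if the only decomposition of `d` into exponents of
potentially-nonzero coefficients is `u + u`, then `coeff d (p^2) = (coeff u p)^2`. -/
lemma coeff_sq_eq {p : MvPolynomial (Fin 3) ℝ} {d u : Fin 3 →₀ ℕ} (huv : u + u = d)
    (H : ∀ a b : Fin 3 →₀ ℕ, a + b = d → coeff a p ≠ 0 → coeff b p ≠ 0 → a = u ∧ b = u) :
    coeff d (p ^ 2) = (coeff u p) ^ 2 := by
  rw [sq, coeff_mul, sq]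
  apply Finset.sum_eq_single (u, u)
  · intro x hx hne
    by_contra hcc
    obtain ⟨h1, h2⟩ := H x.1 x.2 (Finset.HasAntidiagonal.mem_antidiagonal.mp hx)
      (left_ne_zero_of_mul hcc) (right_ne_zero_of_mul hcc)
    exact hne (Prod.ext h1 h2)
  · intro h
    exact absurd (Finset.HasAntidiagonal.mem_antidiagonal.mpr huv) h


/-- generic extraction: if `(u0,u1,u2)+(u0,u1,u2)` is the only possible decomposition,
the coefficient of the doubled monomial in the sum of squares is the sum of squared
coefficients. -/
lemma extract {m : ℕ} {q : Fin m → MvPolynomial (Fin 3) ℝ}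
    (hS : polyS = ∑ i, q i ^ 2) (u0 u1 u2 : ℕ)
    (H : ∀ i (a b : Fin 3 →₀ ℕ), a 0 + b 0 = 2*u0 → a 1 + b 1 = 2*u1 → a 2 + b 2 = 2*u2 →
      coeff a (q i) ≠ 0 → coeff b (q i) ≠ 0 →
      a 0 = u0 ∧ a 1 = u1 ∧ a 2 = u2 ∧ b 0 = u0 ∧ b 1 = u1 ∧ b 2 = u2) :
    coeff (m3 (2*u0) (2*u1) (2*u2)) polyS = ∑ i, (coeff (m3 u0 u1 u2) (q i)) ^ 2 := by
  rw [hS, coeff_sum]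
  refine Finset.sum_congr rfl fun i _ => ?_
  apply coeff_sq_eq
  · apply ext3 <;> simp [Finsupp.add_apply] <;> ring
  · intro a b hab ha hb'
    have e0 := DFunLike.congr_fun hab 0
    have e1 := DFunLike.congr_fun hab 1
    have e2 := DFunLike.congr_fun hab 2
    simp only [Finsupp.add_apply, m3_apply0, m3_apply1, m3_apply2] at e0 e1 e2
    obtain ⟨x0, x1, x2, y0, y1, y2⟩ := H i a b e0 e1 e2 ha hb'
    exact ⟨ext3 (by simp [x0]) (by simp [x1]) (by simp [x2]),
      ext3 (by simp [y0]) (by simp [y1]) (by simp [y2])⟩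

/-- if moreover the corresponding coefficient of `polyS` is zero, all those coefficients
of the `q i` vanish. -/
lemma zero_step {m : ℕ} {q : Fin m → MvPolynomial (Fin 3) ℝ}
    (hS : polyS = ∑ i, q i ^ 2) (u0 u1 u2 : ℕ)
    (H : ∀ i (a b : Fin 3 →₀ ℕ), a 0 + b 0 = 2*u0 → a 1 + b 1 = 2*u1 → a 2 + b 2 = 2*u2 →
      coeff a (q i) ≠ 0 → coeff b (q i) ≠ 0 →
      a 0 = u0 ∧ a 1 = u1 ∧ a 2 = u2 ∧ b 0 = u0 ∧ b 1 = u1 ∧ b 2 = u2)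
    (hval : coeff (m3 (2*u0) (2*u1) (2*u2)) polyS = 0) :
    ∀ i (e : Fin 3 →₀ ℕ), e 0 = u0 → e 1 = u1 → e 2 = u2 → coeff e (q i) = 0 := by
  have h := extract hS u0 u1 u2 H
  rw [hval] at h
  intro i e h0 h1 h2
  have he : e = m3 u0 u1 u2 := ext3 (by simpa using h0) (by simpa using h1) (by simpa using h2)
  rw [he]
  have := (Finset.sum_eq_zero_iff_of_nonneg
    (fun j _ => sq_nonneg (coeff (m3 u0 u1 u2) (q j)))).mp h.symm i (Finset.mem_univ i)
  exact pow_eq_zero_iff (two_ne_zero) |>.mp this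

end PolySAux

set_option maxHeartbeats 1000000 in
open PolySAux in
theorem stmt5 :
    (∀ v : Fin 3 → ℝ, 0 ≤ eval v polyS) ∧
    ¬ ∃ (m : ℕ) (q : Fin m → MvPolynomial (Fin 3) ℝ), polyS = ∑ i, q i ^ 2 := by
  constructor
  · intro v
    have h := amgm3 (v 0) (v 1) (v 2)
    rw [polyS]
    simpa using h
  · rintro ⟨m, q, hS⟩
    have hdeg : ∀ i, (q i).totalDegree ≤ 3 := deg_le hS
    have hb : ∀ i (e : Fin 3 →₀ ℕ), coeff e (q i) ≠ 0 → e 0 + e 1 + e 2 ≤ 3 :=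
      fun i e h => le_trans (coeff_deg_le h) (hdeg i)
    have h300 := zero_step hS 3 0 0
      (fun i a b e0 e1 e2 ha hb' => by
        have ha3 := hb i a ha; have hb3 := hb i b hb'; omega)
      (by rw [coeff_polyS]; norm_num)
    have h030 := zero_step hS 0 3 0
      (fun i a b e0 e1 e2 ha hb' => by
        have ha3 := hb i a ha; have hb3 := hb i b hb'; omega)
      (by rw [coeff_polyS]; norm_num)
    have h003 := zero_step hS 0 0 3
      (fun i a b e0 e1 e2 ha hb' => by
        have ha3 := hb i a ha; have hb3 := hb i b hb'; omega)
      (by rw [coeff_polyS]; norm_num)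
    have h201 := zero_step hS 2 0 1
      (fun i a b e0 e1 e2 ha hb' => by
        have ha3 := hb i a ha; have hb3 := hb i b hb'
        have na1 : ¬(a 0 = 3 ∧ a 1 = 0 ∧ a 2 = 0) := fun ⟨x,y,z⟩ => ha (h300 i a x y z)
        have nb1 : ¬(b 0 = 3 ∧ b 1 = 0 ∧ b 2 = 0) := fun ⟨x,y,z⟩ => hb' (h300 i b x y z)
        have na2 : ¬(a 0 = 0 ∧ a 1 = 0 ∧ a 2 = 3) := fun ⟨x,y,z⟩ => ha (h003 i a x y z)
        have nb2 : ¬(b 0 = 0 ∧ b 1 = 0 ∧ b 2 = 3) := fun ⟨x,y,z⟩ => hb' (h003 i b x y z)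
        omega)
      (by rw [coeff_polyS]; norm_num)
    have h120 := zero_step hS 1 2 0
      (fun i a b e0 e1 e2 ha hb' => by
        have ha3 := hb i a ha; have hb3 := hb i b hb'
        have na1 : ¬(a 0 = 3 ∧ a 1 = 0 ∧ a 2 = 0) := fun ⟨x,y,z⟩ => ha (h300 i a x y z)
        have nb1 : ¬(b 0 = 3 ∧ b 1 = 0 ∧ b 2 = 0) := fun ⟨x,y,z⟩ => hb' (h300 i b x y z)
        have na2 : ¬(a 0 = 0 ∧ a 1 = 3 ∧ a 2 = 0) := fun ⟨x,y,z⟩ => ha (h030 i a x y z)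
        have nb2 : ¬(b 0 = 0 ∧ b 1 = 3 ∧ b 2 = 0) := fun ⟨x,y,z⟩ => hb' (h030 i b x y z)
        omega)
      (by rw [coeff_polyS]; norm_num)
    have h012 := zero_step hS 0 1 2
      (fun i a b e0 e1 e2 ha hb' => by
        have ha3 := hb i a ha; have hb3 := hb i b hb'
        have na1 : ¬(a 0 = 0 ∧ a 1 = 3 ∧ a 2 = 0) := fun ⟨x,y,z⟩ => ha (h030 i a x y z)
        have nb1 : ¬(b 0 = 0 ∧ b 1 = 3 ∧ b 2 = 0) := fun ⟨x,y,z⟩ => hb' (h030 i b x y z)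
        have na2 : ¬(a 0 = 0 ∧ a 1 = 0 ∧ a 2 = 3) := fun ⟨x,y,z⟩ => ha (h003 i a x y z)
        have nb2 : ¬(b 0 = 0 ∧ b 1 = 0 ∧ b 2 = 3) := fun ⟨x,y,z⟩ => hb' (h003 i b x y z)
        omega)
      (by rw [coeff_polyS]; norm_num)
    have hfin := extract hS 1 1 1
      (fun i a b e0 e1 e2 ha hb' => by
        have ha3 := hb i a ha; have hb3 := hb i b hb'
        have na1 : ¬(a 0 = 2 ∧ a 1 = 0 ∧ a 2 = 1) := fun ⟨x,y,z⟩ => ha (h201 i a x y z)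
        have nb1 : ¬(b 0 = 2 ∧ b 1 = 0 ∧ b 2 = 1) := fun ⟨x,y,z⟩ => hb' (h201 i b x y z)
        have na2 : ¬(a 0 = 1 ∧ a 1 = 2 ∧ a 2 = 0) := fun ⟨x,y,z⟩ => ha (h120 i a x y z)
        have nb2 : ¬(b 0 = 1 ∧ b 1 = 2 ∧ b 2 = 0) := fun ⟨x,y,z⟩ => hb' (h120 i b x y z)
        have na3 : ¬(a 0 = 0 ∧ a 1 = 1 ∧ a 2 = 2) := fun ⟨x,y,z⟩ => ha (h012 i a x y z)
        have nb3 : ¬(b 0 = 0 ∧ b 1 = 1 ∧ b 2 = 2) := fun ⟨x,y,z⟩ => hb' (h012 i b x y z)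
        omega)
    rw [coeff_polyS] at hfin
    norm_num at hfin
    have hnn := Finset.sum_nonneg (fun j (_ : j ∈ Finset.univ) => sq_nonneg (coeff (m3 1 1 1) (q j)))
    linarith
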